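/- Let E and F be complex Hilbert spaces and let T be a densely defined closable linear operator from E to F with closure T̄. Define the block operator S in E × F with domain D(S) = D(T) × D(T*) by S(x, y) = (T*y, Tx). Then S is densely defined and symmetric, and its adjoint S* has domain D(T̄) × D(T*) and is given by S*(x, y) = (T*y, T̄x). -/

import Mathlib

section Block

variable {E F : Type*}
  [NormedAddCommGroup E] [InnerProductSpace ℂ E]
  [NormedAddCommGroup F] [InnerProductSpace ℂ F]

namespace LinearPMap

/-- The off-diagonal block operator `(x, y) ↦ (B y, A x)` on the Hilbert space
`WithLp 2 (E × F)` (the product `E × F` with the inner product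
`⟨(x₁,y₁),(x₂,y₂)⟩ = ⟨x₁,x₂⟩ + ⟨y₁,y₂⟩`), with domain `D(A) × D(B)`. -/
noncomputable def blockOffDiag (A : E →ₗ.[ℂ] F) (B : F →ₗ.[ℂ] E) :
    WithLp 2 (E × F) →ₗ.[ℂ] WithLp 2 (E × F) where
  domain := (A.domain.prod B.domain).comap (WithLp.linearEquiv 2 ℂ (E × F)).toLinearMap
  toFun :=
    (WithLp.linearEquiv 2 ℂ (E × F)).symm.toLinearMap.comp <|
      LinearMap.prod
        (B.toFun.comp <| LinearMap.codRestrict B.domain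
          ((LinearMap.snd ℂ E F).comp ((WithLp.linearEquiv 2 ℂ (E × F)).toLinearMap.comp
            ((A.domain.prod B.domain).comap
              (WithLp.linearEquiv 2 ℂ (E × F)).toLinearMap).subtype))
          fun x => x.2.2)
        (A.toFun.comp <| LinearMap.codRestrict A.domain
          ((LinearMap.fst ℂ E F).comp ((WithLp.linearEquiv 2 ℂ (E × F)).toLinearMap.comp
            ((A.domain.prod B.domain).comap
              (WithLp.linearEquiv 2 ℂ (E × F)).toLinearMap).subtype))
          fun x => x.2.1)

/-- The diagonal block operator `(x, y) ↦ (A x, C y)` on the Hilbert space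
`WithLp 2 (E × F)`, with domain `D(A) × D(C)`. -/
noncomputable def blockDiag (A : E →ₗ.[ℂ] E) (C : F →ₗ.[ℂ] F) :
    WithLp 2 (E × F) →ₗ.[ℂ] WithLp 2 (E × F) where
  domain := (A.domain.prod C.domain).comap (WithLp.linearEquiv 2 ℂ (E × F)).toLinearMap
  toFun :=
    (WithLp.linearEquiv 2 ℂ (E × F)).symm.toLinearMap.comp <|
      LinearMap.prod
        (A.toFun.comp <| LinearMap.codRestrict A.domain
          ((LinearMap.fst ℂ E F).comp ((WithLp.linearEquiv 2 ℂ (E × F)).toLinearMap.comp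
            ((A.domain.prod C.domain).comap
              (WithLp.linearEquiv 2 ℂ (E × F)).toLinearMap).subtype))
          fun x => x.2.1)
        (C.toFun.comp <| LinearMap.codRestrict C.domain
          ((LinearMap.snd ℂ E F).comp ((WithLp.linearEquiv 2 ℂ (E × F)).toLinearMap.comp
            ((A.domain.prod C.domain).comap
              (WithLp.linearEquiv 2 ℂ (E × F)).toLinearMap).subtype))
          fun x => x.2.2)

end LinearPMap

end Block

open scoped LinearPMap


noncomputable section

variable {E F : Type*}
  [NormedAddCommGroup E] [InnerProductSpace ℂ E]
  [NormedAddCommGroup F] [InnerProductSpace ℂ F]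

/-- graph of a pmap, transported to the `WithLp 2` product. -/
def grL2 (T : E →ₗ.[ℂ] F) : Submodule ℂ (WithLp 2 (E × F)) :=
  T.graph.comap (WithLp.linearEquiv 2 ℂ (E × F)).toLinearMap

lemma mem_grL2 {T : E →ₗ.[ℂ] F} {z : WithLp 2 (E × F)} :
    z ∈ grL2 T ↔ (WithLp.equiv 2 (E × F) z) ∈ T.graph := Iff.rfl

lemma grL2_coe (T : E →ₗ.[ℂ] F) :
    (grL2 T : Set (WithLp 2 (E × F))) = (WithLp.equiv 2 (E × F)) ⁻¹' (T.graph : Set (E × F)) := rfl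

/-- rotation isometry `(x,y) ↦ (y, -x)` -/
def Jrot (E F : Type*) [NormedAddCommGroup E] [InnerProductSpace ℂ E]
    [NormedAddCommGroup F] [InnerProductSpace ℂ F] :
    WithLp 2 (E × F) ≃ₗᵢ[ℂ] WithLp 2 (F × E) :=
  LinearEquiv.isometryOfInner
    ((WithLp.linearEquiv 2 ℂ (E × F)).trans <|
      ((LinearEquiv.prodComm ℂ E F).trans
        ((LinearEquiv.refl ℂ F).prodCongr (LinearEquiv.neg ℂ))).trans
      (WithLp.linearEquiv 2 ℂ (F × E)).symm)
    (by intro x y; simp [WithLp.prod_inner_apply]; ring)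

@[simp] lemma Jrot_apply (z : WithLp 2 (E × F)) :
    Jrot E F z = (WithLp.equiv 2 (F × E)).symm ((WithLp.equiv 2 (E × F) z).2,
      -(WithLp.equiv 2 (E × F) z).1) := rfl

lemma map_orthogonal' {H H' : Type*} [NormedAddCommGroup H] [InnerProductSpace ℂ H]
    [NormedAddCommGroup H'] [InnerProductSpace ℂ H'] (f : H ≃ₗᵢ[ℂ] H') (K : Submodule ℂ H) :
    (K.map (f.toLinearEquiv : H →ₗ[ℂ] H'))ᗮ = Kᗮ.map (f.toLinearEquiv : H →ₗ[ℂ] H') := by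
  ext u
  simp only [Submodule.mem_orthogonal, Submodule.mem_map]
  constructor
  · intro h
    refine ⟨f.symm u, fun v hv => ?_, by simp⟩
    have := h (f v) ⟨v, hv, rfl⟩
    rw [← f.inner_map_map v (f.symm u)]
    simpa using this
  · rintro ⟨w, hw, rfl⟩ v ⟨v', hv', rfl⟩
    simpa using (f.inner_map_map v' w).trans (hw v' hv')

local notation "⟪" x ", " y "⟫" => @inner ℂ _ _ x y

lemma grL2_adjoint (T : E →ₗ.[ℂ] F) (hT : Dense (T.domain : Set E)) [CompleteSpace E] :
    grL2 (T†) = ((grL2 T).map ((Jrot E F).toLinearEquiv : WithLp 2 (E × F) →ₗ[ℂ] WithLp 2 (F × E)))ᗮ := by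
  ext z
  rw [Submodule.mem_orthogonal]
  constructor
  · intro hz w hw
    rw [Submodule.mem_map] at hw
    obtain ⟨g, hg, rfl⟩ := hw
    rw [mem_grL2, LinearPMap.mem_graph_iff] at hg hz
    obtain ⟨x, hx1, hx2⟩ := hg
    obtain ⟨y, hy1, hy2⟩ := hz
    have key : ⟪T x, (y : F)⟫ = ⟪(x : E), T† y⟫ :=
      (LinearPMap.adjoint_isFormalAdjoint hT).symm x y
    show ⟪((WithLp.equiv 2 (E × F)) g).2, ((WithLp.equiv 2 (F × E)) z).1⟫
      + ⟪-((WithLp.equiv 2 (E × F)) g).1, ((WithLp.equiv 2 (F × E)) z).2⟫ = 0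
    rw [inner_neg_left, ← hx1, ← hx2, ← hy1, ← hy2, key]
    ring
  · intro hz
    have key : ∀ x : T.domain, ⟪((WithLp.equiv 2 (F × E) z).2 : E), (x : E)⟫
        = ⟪((WithLp.equiv 2 (F × E) z).1 : F), T x⟫ := by
      intro x
      have hx : ((Jrot E F) ((WithLp.equiv 2 (E × F)).symm ((x : E), T x))) ∈
          (grL2 T).map ((Jrot E F).toLinearEquiv : WithLp 2 (E × F) →ₗ[ℂ] WithLp 2 (F × E)) := by
        exact Submodule.mem_map_of_mem (by simpa [mem_grL2] using T.mem_graph x)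
      have h0 := hz _ hx
      have : ⟪T x, (WithLp.equiv 2 (F × E) z).1⟫ - ⟪(x : E), (WithLp.equiv 2 (F × E) z).2⟫ = 0 := by
        simpa [inner_neg_left, sub_eq_add_neg] using h0
      have h1 : ⟪(x : E), (WithLp.equiv 2 (F × E) z).2⟫ = ⟪T x, (WithLp.equiv 2 (F × E) z).1⟫ :=
        by linear_combination -this
      calc ⟪((WithLp.equiv 2 (F × E) z).2 : E), (x : E)⟫
          = starRingEnd ℂ ⟪(x : E), (WithLp.equiv 2 (F × E) z).2⟫ := (inner_conj_symm _ _).symm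
        _ = starRingEnd ℂ ⟪T x, (WithLp.equiv 2 (F × E) z).1⟫ := by rw [h1]
        _ = _ := inner_conj_symm _ _
    have hdom : (WithLp.equiv 2 (F × E) z).1 ∈ (T†).domain :=
      T.mem_adjoint_domain_of_exists _ ⟨(WithLp.equiv 2 (F × E) z).2, key⟩
    have happ : T† ⟨(WithLp.equiv 2 (F × E) z).1, hdom⟩ = (WithLp.equiv 2 (F × E) z).2 :=
      LinearPMap.adjoint_apply_eq hT _ key
    rw [mem_grL2, LinearPMap.mem_graph_iff]
    exact ⟨⟨_, hdom⟩, rfl, happ⟩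

/-- closure of transported graph -/
lemma grL2_closure (T : E →ₗ.[ℂ] F) (hcl : T.IsClosable) :
    (grL2 T).topologicalClosure = grL2 T.closure := by
  have h : closure ((WithLp.equiv 2 (E × F)) ⁻¹' (T.graph : Set (E × F)))
      = (WithLp.equiv 2 (E × F)) ⁻¹' closure (T.graph : Set (E × F)) :=
    ((WithLp.prodContinuousLinearEquiv 2 ℂ E F).toHomeomorph.preimage_closure _).symm
  apply SetLike.coe_injective
  rw [Submodule.topologicalClosure_coe, grL2_coe, h, grL2_coe,
    ← Submodule.topologicalClosure_coe, hcl.graph_closure_eq_closure_graph]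

/-- image of grL2 under an isometry-induced map and closure commute -/
lemma map_closure {H H' : Type*} [NormedAddCommGroup H] [InnerProductSpace ℂ H]
    [NormedAddCommGroup H'] [InnerProductSpace ℂ H'] (f : H ≃ₗᵢ[ℂ] H') (K : Submodule ℂ H) :
    (K.map (f.toLinearEquiv : H →ₗ[ℂ] H')).topologicalClosure
      = K.topologicalClosure.map (f.toLinearEquiv : H →ₗ[ℂ] H') := by
  apply SetLike.coe_injective
  rw [Submodule.topologicalClosure_coe, Submodule.map_coe, Submodule.map_coe,
    Submodule.topologicalClosure_coe]
  exact (f.toHomeomorph.image_closure _).symm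

lemma Jrot_Jrot (z : WithLp 2 (E × F)) : Jrot F E (Jrot E F z) = -z := by
  apply (WithLp.equiv 2 (E × F)).injective
  ext <;> simp

lemma map_Jrot_Jrot (K : Submodule ℂ (WithLp 2 (E × F))) :
    (K.map ((Jrot E F).toLinearEquiv : WithLp 2 (E × F) →ₗ[ℂ] WithLp 2 (F × E))).map
      ((Jrot F E).toLinearEquiv : WithLp 2 (F × E) →ₗ[ℂ] WithLp 2 (E × F)) = K := by
  ext z
  simp only [Submodule.mem_map]
  constructor
  · rintro ⟨w, ⟨v, hv, rfl⟩, rfl⟩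
    show Jrot F E (Jrot E F v) ∈ K
    rw [Jrot_Jrot]
    exact K.neg_mem hv
  · intro hz
    exact ⟨Jrot E F (-z), ⟨-z, K.neg_mem hz, rfl⟩, by
      show Jrot F E (Jrot E F (-z)) = z
      rw [Jrot_Jrot, neg_neg]⟩

variable [CompleteSpace E] [CompleteSpace F]

lemma grL2_adjoint_orth (T : E →ₗ.[ℂ] F) (hT : Dense (T.domain : Set E)) (hcl : T.IsClosable) :
    (grL2 (T†))ᗮ = (grL2 T.closure).map
      ((Jrot E F).toLinearEquiv : WithLp 2 (E × F) →ₗ[ℂ] WithLp 2 (F × E)) := by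
  rw [grL2_adjoint T hT, Submodule.orthogonal_orthogonal_eq_closure, map_closure,
    grL2_closure T hcl]

lemma dense_adjoint_domain (T : E →ₗ.[ℂ] F) (hT : Dense (T.domain : Set E))
    (hcl : T.IsClosable) : Dense ((T†).domain : Set F) := by
  rw [Submodule.dense_iff_topologicalClosure_eq_top,
    ← Submodule.orthogonal_orthogonal_eq_closure]
  have hbot : ((T†).domain)ᗮ = ⊥ := by
    rw [Submodule.eq_bot_iff]
    intro z hz
    rw [Submodule.mem_orthogonal] at hz
    -- the element (z, 0) is orthogonal to the graph of T†
    have hw : (WithLp.equiv 2 (F × E)).symm (z, 0) ∈ (grL2 (T†))ᗮ := by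
      rw [Submodule.mem_orthogonal]
      intro u hu
      rw [mem_grL2, LinearPMap.mem_graph_iff] at hu
      obtain ⟨y, hy1, hy2⟩ := hu
      show ⟪(WithLp.equiv 2 (F × E) u).1, z⟫ + ⟪(WithLp.equiv 2 (F × E) u).2, (0 : E)⟫ = 0
      rw [inner_zero_right, add_zero, ← hy1]
      exact hz _ y.2
    rw [grL2_adjoint_orth T hT hcl, Submodule.mem_map] at hw
    obtain ⟨v, hv, hveq⟩ := hw
    rw [mem_grL2, LinearPMap.mem_graph_iff] at hv
    obtain ⟨x, hx1, hx2⟩ := hv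
    -- compare coordinates
    have h2 : -(WithLp.equiv 2 (E × F) v).1 = (0 : E) :=
      congrArg (fun w => (WithLp.equiv 2 (F × E) w).2) hveq
    have h1 : (WithLp.equiv 2 (E × F) v).2 = z :=
      congrArg (fun w => (WithLp.equiv 2 (F × E) w).1) hveq
    have hx0 : (x : E) = 0 := by rw [hx1]; simpa using h2
    have : x = 0 := Subtype.ext hx0
    rw [← h1, ← hx2, this]; exact T.closure.map_zero
  rw [hbot, Submodule.bot_orthogonal_eq_top]

/-- von Neumann: the double adjoint is the closure. -/
lemma adjoint_adjoint_eq_closure (T : E →ₗ.[ℂ] F) (hT : Dense (T.domain : Set E))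
    (hcl : T.IsClosable) : (T†)† = T.closure := by
  have hgr : grL2 ((T†)†) = grL2 T.closure := by
    rw [grL2_adjoint (T†) (dense_adjoint_domain T hT hcl), grL2_adjoint T hT,
      ← map_orthogonal', map_Jrot_Jrot, Submodule.orthogonal_orthogonal_eq_closure,
      grL2_closure T hcl]
  have hsurj : Function.Surjective ((WithLp.linearEquiv 2 ℂ (E × F)).toLinearMap :
      WithLp 2 (E × F) →ₗ[ℂ] E × F) := (WithLp.linearEquiv 2 ℂ (E × F)).surjective
  exact LinearPMap.eq_of_eq_graph (Submodule.comap_injective_of_surjective hsurj hgr)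


end

noncomputable section
variable {E F : Type*}
  [NormedAddCommGroup E] [InnerProductSpace ℂ E]
  [NormedAddCommGroup F] [InnerProductSpace ℂ F]

local notation "⟪" x ", " y "⟫" => @inner ℂ _ _ x y

lemma mem_blockOffDiag_domain {A : E →ₗ.[ℂ] F} {B : F →ₗ.[ℂ] E} {z : WithLp 2 (E × F)} :
    z ∈ (A.blockOffDiag B).domain ↔
      (WithLp.equiv 2 (E × F) z).1 ∈ A.domain ∧ (WithLp.equiv 2 (E × F) z).2 ∈ B.domain :=
  Iff.rfl

lemma blockOffDiag_apply {A : E →ₗ.[ℂ] F} {B : F →ₗ.[ℂ] E}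
    (z : (A.blockOffDiag B).domain) :
    A.blockOffDiag B z = (WithLp.equiv 2 (E × F)).symm
      (B ⟨(WithLp.equiv 2 (E × F) (z : WithLp 2 (E × F))).2, z.2.2⟩,
       A ⟨(WithLp.equiv 2 (E × F) (z : WithLp 2 (E × F))).1, z.2.1⟩) := rfl

variable [CompleteSpace E] [CompleteSpace F]

theorem stmt_7' (T : E →ₗ.[ℂ] F)
    (hT : Dense (T.domain : Set E))
    (hcl : T.IsClosable) :
    Dense (((T.blockOffDiag T.adjoint).domain : Set (WithLp 2 (E × F)))) ∧
      T.blockOffDiag T.adjoint ≤ (T.blockOffDiag T.adjoint).adjoint ∧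
      (T.blockOffDiag T.adjoint).adjoint = T.closure.blockOffDiag T.adjoint := by
  have hd : Dense (((T†).domain : Set F)) := dense_adjoint_domain T hT hcl
  have hfa : (T†).IsFormalAdjoint T := LinearPMap.adjoint_isFormalAdjoint hT
  have hfc : (T†).IsFormalAdjoint T.closure := by
    have h := (LinearPMap.adjoint_isFormalAdjoint hd).symm
    rwa [adjoint_adjoint_eq_closure T hT hcl] at h
  -- dense domain of the block operator
  have hSdense : Dense (((T.blockOffDiag (T†)).domain : Set (WithLp 2 (E × F)))) := by
    have hcoe : (((T.blockOffDiag (T†)).domain : Set (WithLp 2 (E × F))))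
        = ⇑(WithLp.prodContinuousLinearEquiv 2 ℂ E F).toHomeomorph ⁻¹'
          ((T.domain : Set E) ×ˢ (((T†).domain : Set F))) := rfl
    rw [dense_iff_closure_eq, hcoe,
      ← Homeomorph.preimage_closure, (hT.prod hd).closure_eq, Set.preimage_univ]
  -- symmetry
  have hsym : (T.blockOffDiag (T†)).IsFormalAdjoint (T.blockOffDiag (T†)) := by
    intro a b
    have key1 : ⟪(T† ⟨_, a.2.2⟩ : E), ((b : WithLp 2 (E × F)).fst : E)⟫
        = ⟪((a : WithLp 2 (E × F)).snd : F), (T ⟨_, b.2.1⟩ : F)⟫ := hfa ⟨_, a.2.2⟩ ⟨_, b.2.1⟩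
    have key2 : ⟪(T ⟨_, a.2.1⟩ : F), ((b : WithLp 2 (E × F)).snd : F)⟫
        = ⟪((a : WithLp 2 (E × F)).fst : E), (T† ⟨_, b.2.2⟩ : E)⟫ := hfa.symm ⟨_, a.2.1⟩ ⟨_, b.2.2⟩
    show ⟪(T† ⟨_, a.2.2⟩ : E), ((b : WithLp 2 (E × F)).fst : E)⟫
        + ⟪(T ⟨_, a.2.1⟩ : F), ((b : WithLp 2 (E × F)).snd : F)⟫
      = ⟪((a : WithLp 2 (E × F)).fst : E), (T† ⟨_, b.2.2⟩ : E)⟫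
        + ⟪((a : WithLp 2 (E × F)).snd : F), (T ⟨_, b.2.1⟩ : F)⟫
    rw [key1, key2]
    ring
  refine ⟨hSdense, hsym.le_adjoint hSdense, ?_⟩
  -- the closure block is a formal adjoint
  have hfa' : (T.blockOffDiag (T†)).IsFormalAdjoint (T.closure.blockOffDiag (T†)) := by
    intro a b
    have key1 : ⟪(T† ⟨_, a.2.2⟩ : E), ((b : WithLp 2 (E × F)).fst : E)⟫
        = ⟪((a : WithLp 2 (E × F)).snd : F), (T.closure ⟨_, b.2.1⟩ : F)⟫ := hfc ⟨_, a.2.2⟩ ⟨_, b.2.1⟩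
    have key2 : ⟪(T ⟨_, a.2.1⟩ : F), ((b : WithLp 2 (E × F)).snd : F)⟫
        = ⟪((a : WithLp 2 (E × F)).fst : E), (T† ⟨_, b.2.2⟩ : E)⟫ := hfa.symm ⟨_, a.2.1⟩ ⟨_, b.2.2⟩
    show ⟪(T† ⟨_, a.2.2⟩ : E), ((b : WithLp 2 (E × F)).fst : E)⟫
        + ⟪(T ⟨_, a.2.1⟩ : F), ((b : WithLp 2 (E × F)).snd : F)⟫
      = ⟪((a : WithLp 2 (E × F)).fst : E), (T† ⟨_, b.2.2⟩ : E)⟫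
        + ⟪((a : WithLp 2 (E × F)).snd : F), (T.closure ⟨_, b.2.1⟩ : F)⟫
    rw [key1, key2]
    ring
  have hle : T.closure.blockOffDiag (T†) ≤ (T.blockOffDiag (T†))† := hfa'.le_adjoint hSdense
  -- reverse domain inclusion
  have hdomle : ((T.blockOffDiag (T†))†).domain ≤ (T.closure.blockOffDiag (T†)).domain := by
    intro z hz
    have haS := LinearPMap.adjoint_isFormalAdjoint hSdense
    -- second coordinate
    have hmem2 : (WithLp.equiv 2 (E × F) z).2 ∈ (T†).domain := by
      apply T.mem_adjoint_domain_of_exists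
      refine ⟨(WithLp.equiv 2 (E × F) ((T.blockOffDiag (T†))† ⟨z, hz⟩)).1, fun x => ?_⟩
      have hamem : (WithLp.equiv 2 (E × F)).symm ((x : E), (0 : F))
          ∈ (T.blockOffDiag (T†)).domain := ⟨x.2, Submodule.zero_mem _⟩
      have h := haS ⟨z, hz⟩ ⟨_, hamem⟩
      have hTz : (T† ⟨(0 : F), (Submodule.zero_mem _ : (0:F) ∈ (T†).domain)⟩ : E) = 0 := by
        have : (⟨(0 : F), Submodule.zero_mem _⟩ : (T†).domain) = 0 := rfl
        rw [this]; exact (T†).map_zero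
      have h' : ⟪(WithLp.equiv 2 (E × F) ((T.blockOffDiag (T†))† ⟨z, hz⟩)).1, (x : E)⟫
            + ⟪(WithLp.equiv 2 (E × F) ((T.blockOffDiag (T†))† ⟨z, hz⟩)).2, (0 : F)⟫
          = ⟪(WithLp.equiv 2 (E × F) z).1, (T† ⟨(0 : F), Submodule.zero_mem _⟩ : E)⟫
            + ⟪(WithLp.equiv 2 (E × F) z).2, (T ⟨(x : E), x.2⟩ : F)⟫ := h
      rw [hTz, inner_zero_right, inner_zero_right, add_zero, zero_add] at h'
      exact h'
    -- first coordinate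
    have hmem1 : (WithLp.equiv 2 (E × F) z).1 ∈ ((T†)†).domain := by
      apply (T†).mem_adjoint_domain_of_exists
      refine ⟨(WithLp.equiv 2 (E × F) ((T.blockOffDiag (T†))† ⟨z, hz⟩)).2, fun y => ?_⟩
      have hamem : (WithLp.equiv 2 (E × F)).symm ((0 : E), (y : F))
          ∈ (T.blockOffDiag (T†)).domain := ⟨Submodule.zero_mem _, y.2⟩
      have h := haS ⟨z, hz⟩ ⟨_, hamem⟩
      have hTz : (T ⟨(0 : E), (Submodule.zero_mem _ : (0:E) ∈ T.domain)⟩ : F) = 0 := by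
        have : (⟨(0 : E), Submodule.zero_mem _⟩ : T.domain) = 0 := rfl
        rw [this]; exact T.map_zero
      have h' : ⟪(WithLp.equiv 2 (E × F) ((T.blockOffDiag (T†))† ⟨z, hz⟩)).1, (0 : E)⟫
            + ⟪(WithLp.equiv 2 (E × F) ((T.blockOffDiag (T†))† ⟨z, hz⟩)).2, (y : F)⟫
          = ⟪(WithLp.equiv 2 (E × F) z).1, (T† ⟨(y : F), y.2⟩ : E)⟫
            + ⟪(WithLp.equiv 2 (E × F) z).2, (T ⟨(0 : E), Submodule.zero_mem _⟩ : F)⟫ := h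
      rw [hTz, inner_zero_right, inner_zero_right, add_zero, zero_add] at h'
      exact h'
    rw [adjoint_adjoint_eq_closure T hT hcl] at hmem1
    exact ⟨hmem1, hmem2⟩
  exact (LinearPMap.ext (le_antisymm hle.1 hdomle) (fun x hf hg => hle.2 rfl)).symm

end

theorem stmt_7 {E F : Type*}
    [NormedAddCommGroup E] [InnerProductSpace ℂ E] [CompleteSpace E]
    [NormedAddCommGroup F] [InnerProductSpace ℂ F] [CompleteSpace F]
    (T : E →ₗ.[ℂ] F)
    (hT : Dense (T.domain : Set E))
    (hcl : T.IsClosable) :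
    Dense (((T.blockOffDiag T.adjoint).domain : Set (WithLp 2 (E × F)))) ∧
      T.blockOffDiag T.adjoint ≤ (T.blockOffDiag T.adjoint).adjoint ∧
      (T.blockOffDiag T.adjoint).adjoint = T.closure.blockOffDiag T.adjoint :=
  stmt_7' T hT hcl
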